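/- Let d ≥ 2 be an integer. For every bounded Borel set A ⊆ ℝ^{d−1} and every bounded Borel set B ⊆ ℝ, lim_{β→∞} c'_{d,β} (2β)^{−d/2} ∫_A ∫_B 1{s < 2β} (1 − s/(2β))^{−β} ds dw = (2π)^{−d/2} · λ_{d−1}(A) · ∫_B e^{s/2} ds, where λ_{d−1} is Lebesgue measure on ℝ^{d−1}. -/

import Mathlib

open MeasureTheory

section aux
open Filter Real

/-- Fractional step: `Γ(x+a)/(Γ(x) x^a) → 1` for `0 < a < 1`. -/
private lemma frac_step' {a : ℝ} (ha0 : 0 < a) (ha1 : a < 1) :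
    Tendsto (fun x : ℝ => Real.Gamma (x + a) / (Real.Gamma x * x ^ a)) atTop (nhds 1) := by
  have h1a : (0:ℝ) < 1 - a := by linarith
  have hlow : Tendsto (fun x : ℝ => (x / (x + a)) ^ (1 - a)) atTop (nhds 1) := by
    have : Tendsto (fun x : ℝ => x / (x + a)) atTop (nhds 1) := by
      have h2 : Tendsto (fun x : ℝ => 1 - a / (x + a)) atTop (nhds (1 - 0)) :=
        tendsto_const_nhds.sub (tendsto_const_nhds.div_atTop (tendsto_atTop_add_const_right _ a tendsto_id))
      rw [sub_zero] at h2
      refine h2.congr' ?_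
      filter_upwards [eventually_gt_atTop (max 0 (-a))] with x hx
      have hxa : 0 < x + a := by
        have := lt_of_le_of_lt (le_max_right 0 (-a)) hx; linarith
      field_simp
      ring
    have := this.rpow_const (p := 1 - a) (Or.inl one_ne_zero)
    simpa using this
  refine tendsto_of_tendsto_of_tendsto_of_le_of_le' hlow tendsto_const_nhds ?_ ?_
  · filter_upwards [eventually_gt_atTop (0:ℝ)] with x hx
    have hxa : 0 < x + a := by linarith
    have hG : 0 < Real.Gamma x := Real.Gamma_pos_of_pos hx
    have hGa : 0 < Real.Gamma (x + a) := Real.Gamma_pos_of_pos (by linarith)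
    have hxp : 0 < x ^ a := Real.rpow_pos_of_pos hx a
    have key : Real.Gamma (x + 1) ≤ Real.Gamma (x + a) * (x + a) ^ (1 - a) := by
      have h := Real.Gamma_mul_add_mul_le_rpow_Gamma_mul_rpow_Gamma
        (s := x + a) (t := x + a + 1) (a := a) (b := 1 - a) hxa (by linarith) ha0 h1a (by ring)
      have hc : a * (x + a) + (1 - a) * (x + a + 1) = x + 1 := by ring
      rw [hc] at h
      have h2 : Real.Gamma (x + a + 1) = (x + a) * Real.Gamma (x + a) :=
        Real.Gamma_add_one (ne_of_gt hxa)
      rw [h2, Real.mul_rpow (le_of_lt hxa) (le_of_lt hGa)] at h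
      calc Real.Gamma (x + 1) ≤ Real.Gamma (x+a) ^ a * ((x+a) ^ (1-a) * Real.Gamma (x+a) ^ (1-a)) := h
        _ = (Real.Gamma (x+a) ^ a * Real.Gamma (x+a) ^ (1-a)) * (x+a)^(1-a) := by ring
        _ = Real.Gamma (x + a) * (x + a) ^ (1 - a) := by
            rw [← Real.rpow_add hGa]; norm_num
    have hGx1 : Real.Gamma (x + 1) = x * Real.Gamma x := Real.Gamma_add_one (ne_of_gt hx)
    rw [hGx1] at key
    rw [Real.div_rpow (le_of_lt hx) (le_of_lt hxa),
      div_le_div_iff₀ (Real.rpow_pos_of_pos hxa _) (by positivity)]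
    calc x ^ (1-a) * (Real.Gamma x * x ^ a) = (x ^ (1-a) * x ^ a) * Real.Gamma x := by ring
      _ = x * Real.Gamma x := by rw [← Real.rpow_add hx]; norm_num
      _ ≤ Real.Gamma (x+a) * (x+a)^(1-a) := key
  · filter_upwards [eventually_gt_atTop (0:ℝ)] with x hx
    have hG : 0 < Real.Gamma x := Real.Gamma_pos_of_pos hx
    have hxp : 0 < x ^ a := Real.rpow_pos_of_pos hx a
    have key : Real.Gamma (x + a) ≤ Real.Gamma x * x ^ a := by
      have h := Real.Gamma_mul_add_mul_le_rpow_Gamma_mul_rpow_Gamma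
        (s := x) (t := x + 1) (a := 1 - a) (b := a) hx (by linarith) h1a ha0 (by ring)
      have hc : (1 - a) * x + a * (x + 1) = x + a := by ring
      rw [hc, Real.Gamma_add_one (ne_of_gt hx), Real.mul_rpow (le_of_lt hx) (le_of_lt hG)] at h
      calc Real.Gamma (x + a) ≤ Real.Gamma x ^ (1-a) * (x ^ a * Real.Gamma x ^ a) := h
        _ = (Real.Gamma x ^ (1-a) * Real.Gamma x ^ a) * x ^ a := by ring
        _ = Real.Gamma x * x ^ a := by rw [← Real.rpow_add hG]; norm_num
    rw [div_le_one (by positivity)]; exact key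

private lemma ratio_base' {a : ℝ} (ha0 : 0 < a) (ha1 : a ≤ 1) :
    Tendsto (fun β : ℝ => Real.Gamma β / (Real.Gamma (β - a) * β ^ a)) atTop (nhds 1) := by
  rcases eq_or_lt_of_le ha1 with rfl | ha1
  · have h : Tendsto (fun β : ℝ => 1 - 1 / β) atTop (nhds (1 - 0)) :=
      tendsto_const_nhds.sub (tendsto_const_nhds.div_atTop tendsto_id)
    rw [sub_zero] at h
    refine h.congr' ?_
    filter_upwards [eventually_gt_atTop (1:ℝ)] with β hβ
    have hb1 : β - 1 ≠ 0 := by linarith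
    have hG : 0 < Real.Gamma (β - 1) := Real.Gamma_pos_of_pos (by linarith)
    have : Real.Gamma β = (β - 1) * Real.Gamma (β - 1) := by
      have := Real.Gamma_add_one hb1; rw [sub_add_cancel] at this; exact this
    rw [this, Real.rpow_one]
    field_simp
  · have h1 := (frac_step' ha0 ha1).comp (tendsto_atTop_add_const_right atTop (-a) tendsto_id)
    have h2 : Tendsto (fun β : ℝ => ((β - a) / β) ^ a) atTop (nhds 1) := by
      have hb : Tendsto (fun β : ℝ => 1 - a / β) atTop (nhds (1 - 0)) :=
        tendsto_const_nhds.sub (tendsto_const_nhds.div_atTop tendsto_id)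
      rw [sub_zero] at hb
      have := hb.rpow_const (p := a) (Or.inl one_ne_zero)
      rw [Real.one_rpow] at this
      refine this.congr' ?_
      filter_upwards [eventually_gt_atTop (0:ℝ)] with β hβ
      rw [sub_div, div_self (ne_of_gt hβ)]
    have h3 := h1.mul h2
    rw [mul_one] at h3
    refine h3.congr' ?_
    filter_upwards [eventually_gt_atTop (max a 0)] with β hβ
    have hβa : 0 < β - a := by have := (max_lt_iff.mp hβ).1; linarith
    have hβ0 : 0 < β := (max_lt_iff.mp hβ).2
    simp only [Function.comp]
    rw [Real.div_rpow (le_of_lt hβa) (le_of_lt hβ0)]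
    rw [show (id β + -a : ℝ) = β - a by simp [sub_eq_add_neg]]
    rw [sub_add_cancel]
    have hGa : 0 < Real.Gamma (β - a) := Real.Gamma_pos_of_pos hβa
    have e1 : (0:ℝ) < (β - a) ^ a := Real.rpow_pos_of_pos hβa a
    have e2 : (0:ℝ) < β ^ a := Real.rpow_pos_of_pos hβ0 a
    field_simp

private lemma ratio_tendsto' {a : ℝ} (ha0 : 0 < a) (ha1 : a ≤ 1) (k : ℕ) :
    Tendsto (fun β : ℝ => Real.Gamma β / (Real.Gamma (β - (a + k)) * β ^ (a + (k:ℝ))))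
      atTop (nhds 1) := by
  induction k with
  | zero => simpa using ratio_base' ha0 ha1
  | succ k ih =>
      have h2 : Tendsto (fun β : ℝ => (β - (a + k) - 1) / β) atTop (nhds 1) := by
        have hb : Tendsto (fun β : ℝ => 1 - (a + k + 1) / β) atTop (nhds (1 - 0)) :=
          tendsto_const_nhds.sub (tendsto_const_nhds.div_atTop tendsto_id)
        rw [sub_zero] at hb
        refine hb.congr' ?_
        filter_upwards [eventually_gt_atTop (0:ℝ)] with β hβ
        field_simp
        ring
      have h3 := ih.mul h2
      rw [mul_one] at h3
      refine h3.congr' ?_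
      filter_upwards [eventually_gt_atTop (max (a + k + 1) 0)] with β hβ
      have hβ1 : a + k + 1 < β := (max_lt_iff.mp hβ).1
      have hβ0 : 0 < β := (max_lt_iff.mp hβ).2
      have hs : 0 < β - (a + k) - 1 := by linarith
      have hGs : 0 < Real.Gamma (β - (a + k) - 1) := Real.Gamma_pos_of_pos hs
      have hgam : Real.Gamma (β - (a + k)) = (β - (a + k) - 1) * Real.Gamma (β - (a + k) - 1) := by
        have := Real.Gamma_add_one (ne_of_gt hs); rw [sub_add_cancel] at this; exact this
      have hpow : β ^ (a + ((k:ℝ) + 1)) = β ^ (a + (k:ℝ)) * β := by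
        rw [show a + ((k:ℝ) + 1) = (a + (k:ℝ)) + 1 by ring, Real.rpow_add hβ0, Real.rpow_one]
      have hcast : ((k + 1 : ℕ) : ℝ) = (k : ℝ) + 1 := by push_cast; ring
      rw [hcast, hpow]
      rw [show β - (a + ((k:ℝ)+1)) = β - (a + k) - 1 by ring, hgam]
      have e2 : (0:ℝ) < β ^ (a + (k:ℝ)) := Real.rpow_pos_of_pos hβ0 _
      field_simp

private lemma ptwise' (s : ℝ) :
    Tendsto (fun β : ℝ => if s < 2 * β then (1 - s / (2 * β)) ^ (-β) else 0)
      atTop (nhds (Real.exp (s / 2))) := by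
  have hlog : Tendsto (fun x : ℝ => x * Real.log (1 + (-s) / x)) atTop (nhds (-s)) :=
    Real.tendsto_mul_log_one_add_div_atTop (-s)
  have h2β : Tendsto (fun β : ℝ => 2 * β) atTop atTop :=
    (tendsto_id (α := ℝ)).const_mul_atTop two_pos
  have h1 : Tendsto (fun β : ℝ => (2 * β) * Real.log (1 + (-s) / (2 * β))) atTop (nhds (-s)) :=
    hlog.comp h2β
  have h2 : Tendsto (fun β : ℝ => (-(1:ℝ)/2) * ((2 * β) * Real.log (1 + (-s) / (2 * β))))
      atTop (nhds ((-(1:ℝ)/2) * (-s))) := h1.const_mul _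
  have h3 : Tendsto (fun β : ℝ => Real.exp ((-(1:ℝ)/2) * ((2 * β) * Real.log (1 + (-s) / (2 * β)))))
      atTop (nhds (Real.exp ((-(1:ℝ)/2) * (-s)))) := (Real.continuous_exp.tendsto _).comp h2
  have hval : (-(1:ℝ)/2) * (-s) = s / 2 := by ring
  rw [hval] at h3
  refine h3.congr' ?_
  filter_upwards [eventually_gt_atTop (|s| / 2), eventually_gt_atTop 0] with β hβ hβ0
  have hs2β : s < 2 * β := by
    have := le_abs_self s; nlinarith
  have hbase : 0 < 1 - s / (2 * β) := by
    rw [sub_pos, div_lt_one (by linarith)]; exact hs2β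
  rw [if_pos hs2β, Real.rpow_def_of_pos hbase]
  congr 1
  rw [show 1 + (-s) / (2 * β) = 1 - s / (2 * β) by ring]
  ring

private lemma dominated' {M : ℝ} (hM : 0 ≤ M) {s β : ℝ} (hs : |s| ≤ M) (hβ : max M 1 ≤ β) :
    |if s < 2 * β then (1 - s / (2 * β)) ^ (-β) else 0| ≤ Real.exp M := by
  have hβ1 : 1 ≤ β := le_trans (le_max_right M 1) hβ
  have hβM : M ≤ β := le_trans (le_max_left M 1) hβ
  have hβ0 : 0 < β := by linarith
  have hsM : s ≤ M := le_trans (le_abs_self s) hs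
  split_ifs with h
  · have hbase : 0 < 1 - s / (2 * β) := by
      rw [sub_pos, div_lt_one (by linarith)]; exact h
    have hnn : 0 ≤ (1 - s / (2 * β)) ^ (-β) := le_of_lt (Real.rpow_pos_of_pos hbase _)
    rw [abs_of_nonneg hnn]
    rcases le_or_gt s 0 with hs0 | hs0
    · have hb1 : 1 ≤ 1 - s / (2 * β) := by
        have : s / (2 * β) ≤ 0 := div_nonpos_of_nonpos_of_nonneg hs0 (by linarith)
        linarith
      have hle := Real.rpow_le_one_of_one_le_of_nonpos hb1 (by linarith : -β ≤ 0)
      calc (1 - s / (2*β)) ^ (-β) ≤ 1 := hle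
        _ ≤ Real.exp M := by
            calc (1:ℝ) = Real.exp 0 := (Real.exp_zero).symm
              _ ≤ Real.exp M := Real.exp_le_exp.mpr hM
    · set u := s / (2 * β) with hu
      have hu0 : 0 < u := div_pos hs0 (by linarith)
      have huhalf : u ≤ 1 / 2 := by
        rw [hu, div_le_div_iff₀ (by linarith) (by norm_num)]
        linarith
      have hlog : -(2 * u) ≤ Real.log (1 - u) := by
        have hpos : 0 < (1 - u)⁻¹ := by positivity
        have h1 := Real.log_le_sub_one_of_pos hpos
        rw [Real.log_inv] at h1
        have h2 : (1 - u)⁻¹ - 1 = u / (1 - u) := by field_simp; ring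
        rw [h2] at h1
        have h3 : u / (1 - u) ≤ 2 * u := by
          rw [div_le_iff₀ (by linarith)]
          nlinarith
        linarith
      rw [Real.rpow_def_of_pos hbase]
      have hle : Real.log (1 - s / (2 * β)) * (-β) ≤ M := by
        have hexp : Real.log (1 - u) * (-β) ≤ 2 * u * β := by
          nlinarith [hlog]
        have h2uβ : 2 * u * β = s := by
          rw [hu]; field_simp
        rw [← hu]
        calc Real.log (1 - u) * (-β) ≤ 2 * u * β := hexp
          _ = s := h2uβ
          _ ≤ M := hsM
      exact Real.exp_le_exp.mpr hle
  · simpa using Real.exp_nonneg M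

end aux

/-- The constant `c'_{d,β} = Γ(β)/(π^{d/2} Γ(β-d/2))`. -/
noncomputable def cPrime (d : ℕ) (β : ℝ) : ℝ :=
  Real.Gamma β / (Real.pi ^ ((d : ℝ) / 2) * Real.Gamma (β - (d : ℝ) / 2))

/-- For bounded Borel `A ⊆ ℝ^{d-1}` and `B ⊆ ℝ`,
`c'_{d,β} (2β)^{-d/2} ∫_A ∫_B 1{s < 2β}(1-s/(2β))^{-β} ds dw →
(2π)^{-d/2} λ_{d-1}(A) ∫_B e^{s/2} ds` as `β → ∞`. -/
theorem stmt_3 (d : ℕ) (hd : 2 ≤ d)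
    (A : Set (EuclideanSpace ℝ (Fin (d - 1)))) (hA : MeasurableSet A)
    (hAb : Bornology.IsBounded A)
    (B : Set ℝ) (hB : MeasurableSet B) (hBb : Bornology.IsBounded B) :
    Filter.Tendsto (fun β : ℝ =>
        cPrime d β * (2 * β) ^ (-(d : ℝ) / 2) *
          ∫ _v in A, ∫ s in B, (if s < 2 * β then (1 - s / (2 * β)) ^ (-β) else 0))
      Filter.atTop
      (nhds ((2 * Real.pi) ^ (-(d : ℝ) / 2) * (volume A).toReal *
        ∫ s in B, Real.exp (s / 2))) := by
  classical
  -- bound on B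
  obtain ⟨M₀, hM₀⟩ := hBb.exists_norm_le
  set M : ℝ := max M₀ 0 with hMdef
  have hM : 0 ≤ M := le_max_right _ _
  have hMB : ∀ s ∈ B, |s| ≤ M := fun s hs => by
    have := hM₀ s hs; rw [Real.norm_eq_abs] at this
    exact le_trans this (le_max_left _ _)
  -- the inner-integral limit by dominated convergence
  have hg : Filter.Tendsto
      (fun β : ℝ => ∫ s in B, (if s < 2 * β then (1 - s / (2 * β)) ^ (-β) else 0))
      Filter.atTop (nhds (∫ s in B, Real.exp (s / 2))) := by
    refine MeasureTheory.tendsto_integral_filter_of_dominated_convergence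
      (fun _ => Real.exp M) ?_ ?_ ?_ ?_
    · filter_upwards [Filter.eventually_gt_atTop (0:ℝ)] with β hβ
      have hfun : (fun s : ℝ => if s < 2 * β then (1 - s / (2 * β)) ^ (-β) else 0)
          = fun s => if s < 2 * β then Real.exp (Real.log (1 - s / (2 * β)) * (-β)) else 0 := by
        funext s
        split_ifs with h
        · rw [Real.rpow_def_of_pos]
          rw [sub_pos, div_lt_one (by linarith)]; exact h
        · rfl
      rw [hfun]
      refine (Measurable.ite (measurableSet_lt measurable_id measurable_const) ?_
        measurable_const).aestronglyMeasurable
      exact Real.measurable_exp.comp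
        ((Real.measurable_log.comp (measurable_const.sub (measurable_id.div_const _))).mul
          measurable_const)
    · filter_upwards [Filter.eventually_ge_atTop (max M 1)] with β hβ
      refine (MeasureTheory.ae_restrict_iff' hB).mpr (Filter.Eventually.of_forall ?_)
      intro s hs
      rw [Real.norm_eq_abs]
      exact dominated' hM (hMB s hs) hβ
    · exact integrableOn_const hBb.measure_lt_top.ne
    · exact Filter.Eventually.of_forall fun s => ptwise' s
  -- the constant limit
  have hconst : Filter.Tendsto (fun β : ℝ => cPrime d β * (2 * β) ^ (-(d : ℝ) / 2))
      Filter.atTop (nhds ((2 * Real.pi) ^ (-(d : ℝ) / 2))) := by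
    -- find `a ∈ (0,1]` and `k` with `d/2 = a + k`
    obtain ⟨a, k, ha0, ha1, hak⟩ :
        ∃ (a : ℝ) (k : ℕ), 0 < a ∧ a ≤ 1 ∧ (d : ℝ) / 2 = a + k := by
      rcases Nat.even_or_odd d with ⟨m, hm⟩ | ⟨m, hm⟩
      · have hm1 : 1 ≤ m := by omega
        refine ⟨1, m - 1, one_pos, le_refl 1, ?_⟩
        have : ((m - 1 : ℕ) : ℝ) = (m : ℝ) - 1 := by
          push_cast [Nat.cast_sub hm1]; ring
        rw [this, hm]; push_cast; ring
      · refine ⟨1/2, m, by norm_num, by norm_num, ?_⟩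
        rw [hm]; push_cast; ring
    have hratio := ratio_tendsto' ha0 ha1 k
    rw [← hak] at hratio
    have hmul := hratio.mul_const ((2 * Real.pi) ^ (-(d : ℝ) / 2))
    rw [one_mul] at hmul
    refine hmul.congr' ?_
    filter_upwards [Filter.eventually_gt_atTop (max ((d : ℝ) / 2) 0)] with β hβ
    have hβd : (d : ℝ) / 2 < β := (max_lt_iff.mp hβ).1
    have hβ0 : 0 < β := (max_lt_iff.mp hβ).2
    have hGpos : 0 < Real.Gamma (β - (d : ℝ) / 2) := Real.Gamma_pos_of_pos (by linarith)
    have hπ : (0:ℝ) < Real.pi ^ ((d : ℝ) / 2) := Real.rpow_pos_of_pos Real.pi_pos _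
    have h2 : (0:ℝ) < (2:ℝ) ^ ((d : ℝ) / 2) := Real.rpow_pos_of_pos two_pos _
    have hβp : (0:ℝ) < β ^ ((d : ℝ) / 2) := Real.rpow_pos_of_pos hβ0 _
    have e1 : (2 * β) ^ (-(d : ℝ) / 2) = ((2:ℝ) ^ ((d : ℝ) / 2) * β ^ ((d : ℝ) / 2))⁻¹ := by
      rw [show (-(d : ℝ) / 2) = -((d : ℝ) / 2) by ring,
        Real.rpow_neg (by linarith : (0:ℝ) ≤ 2 * β),
        Real.mul_rpow (by norm_num : (0:ℝ) ≤ 2) (le_of_lt hβ0)]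
    have e2 : (2 * Real.pi) ^ (-(d : ℝ) / 2)
        = ((2:ℝ) ^ ((d : ℝ) / 2) * Real.pi ^ ((d : ℝ) / 2))⁻¹ := by
      rw [show (-(d : ℝ) / 2) = -((d : ℝ) / 2) by ring,
        Real.rpow_neg (by positivity : (0:ℝ) ≤ 2 * Real.pi),
        Real.mul_rpow (by norm_num : (0:ℝ) ≤ 2) Real.pi_pos.le]
    rw [cPrime, e1, e2]
    field_simp
  -- assemble
  have hfinal := hconst.mul (hg.const_mul ((volume A).toReal))
  have heq : (fun β : ℝ =>
      cPrime d β * (2 * β) ^ (-(d : ℝ) / 2) *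
        ∫ _v in A, ∫ s in B, (if s < 2 * β then (1 - s / (2 * β)) ^ (-β) else 0))
      = fun β : ℝ => cPrime d β * (2 * β) ^ (-(d : ℝ) / 2) *
          ((volume A).toReal * ∫ s in B, (if s < 2 * β then (1 - s / (2 * β)) ^ (-β) else 0)) := by
    funext β
    rw [MeasureTheory.setIntegral_const, smul_eq_mul, measureReal_def]
  rw [heq]
  have hassoc : (2 * Real.pi) ^ (-(d : ℝ) / 2) * (volume A).toReal * ∫ s in B, Real.exp (s / 2)
      = (2 * Real.pi) ^ (-(d : ℝ) / 2) * ((volume A).toReal * ∫ s in B, Real.exp (s / 2)) :=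
    mul_assoc _ _ _
  rw [hassoc]
  exact hfinal
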